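/- arXiv:1811.05051 — 4 statements merged into one kernel-verified Lean document; each statement's English description precedes it below -/
import Mathlib

section
/- Let p > 1 and let δ ≤ β < p − 1 be real numbers, let t ∈ (0, 1], M > 0 and E ≥ 1. Define m₂ = max{1, (3ME/t^{p−1})^{1/(p−1−β)}} and τ = 1/(p−1−δ). Then for every α with 0 < α ≤ 1, the inequality (α^τ m₂ t)^{p−1} ≥ α M E (m₂^δ α^{τδ} + m₂^β α^{τβ}) holds. -/
theorem stmt_1 (p δ β t M E : ℝ)
    (hp : 1 < p) (hδβ : δ ≤ β) (hβ : β < p - 1)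
    (ht : t ∈ Set.Ioc (0:ℝ) 1) (hM : 0 < M) (hE : 1 ≤ E)
    (m₂ τ : ℝ)
    (hm₂ : m₂ = max 1 ((3 * M * E / t ^ (p - 1)) ^ (1 / (p - 1 - β))))
    (hτ : τ = 1 / (p - 1 - δ)) :
    ∀ α : ℝ, 0 < α → α ≤ 1 →
      α * M * E * (m₂ ^ δ * α ^ (τ * δ) + m₂ ^ β * α ^ (τ * β)) ≤
        (α ^ τ * m₂ * t) ^ (p - 1) := by
  intro α hα0 hα1
  obtain ⟨ht0, ht1⟩ := ht
  have hc : (0:ℝ) < p - 1 - β := by linarith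
  have hd : (0:ℝ) < p - 1 - δ := by linarith
  have hτ0 : 0 < τ := by rw [hτ]; positivity
  have hm1 : (1:ℝ) ≤ m₂ := hm₂ ▸ le_max_left _ _
  have hm0 : (0:ℝ) < m₂ := lt_of_lt_of_le one_pos hm1
  have htp : (0:ℝ) < t ^ (p - 1) := Real.rpow_pos_of_pos ht0 _
  have hτd : τ * (p - 1 - δ) = 1 := by rw [hτ]; field_simp
  have hE0 : (0:ℝ) < E := lt_of_lt_of_le one_pos hE
  -- key estimate
  have h3 : 3 * M * E / t ^ (p - 1) ≤ m₂ ^ (p - 1 - β) := by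
    have hx : (3 * M * E / t ^ (p - 1)) ^ (1 / (p - 1 - β)) ≤ m₂ :=
      hm₂ ▸ le_max_right _ _
    have hx0 : (0:ℝ) ≤ 3 * M * E / t ^ (p - 1) := by positivity
    calc 3 * M * E / t ^ (p - 1)
        = ((3 * M * E / t ^ (p - 1)) ^ (1 / (p - 1 - β))) ^ (p - 1 - β) := by
          rw [← Real.rpow_mul hx0, one_div_mul_cancel hc.ne', Real.rpow_one]
      _ ≤ m₂ ^ (p - 1 - β) :=
          Real.rpow_le_rpow (Real.rpow_nonneg hx0 _) hx hc.le
  have key : 2 * (M * E) * m₂ ^ β ≤ m₂ ^ (p - 1) * t ^ (p - 1) := by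
    have hsplit : m₂ ^ (p - 1) = m₂ ^ β * m₂ ^ (p - 1 - β) := by
      rw [← Real.rpow_add hm0]; ring_nf
    have h4 : 3 * M * E ≤ m₂ ^ (p - 1 - β) * t ^ (p - 1) := by
      calc 3 * M * E = (3 * M * E / t ^ (p - 1)) * t ^ (p - 1) := by
            field_simp
        _ ≤ m₂ ^ (p - 1 - β) * t ^ (p - 1) := by
            exact mul_le_mul_of_nonneg_right h3 htp.le
    have hmβ : (0:ℝ) < m₂ ^ β := Real.rpow_pos_of_pos hm0 _
    rw [hsplit]
    nlinarith [mul_le_mul_of_nonneg_left h4 hmβ.le, mul_pos (mul_pos hM hE0) hmβ]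
  -- exponent identities
  have e1 : α * α ^ (τ * δ) = α ^ (τ * (p - 1)) := by
    rw [show α * α ^ (τ * δ) = α ^ (1 + τ * δ) by
      rw [Real.rpow_add hα0, Real.rpow_one]]
    congr 1; nlinarith [hτd]
  have e2 : α * α ^ (τ * β) ≤ α ^ (τ * (p - 1)) := by
    rw [show α * α ^ (τ * β) = α ^ (1 + τ * β) by
      rw [Real.rpow_add hα0, Real.rpow_one]]
    apply Real.rpow_le_rpow_of_exponent_ge hα0 hα1
    nlinarith [mul_le_mul_of_nonneg_left hδβ hτ0.le]
  have e3 : m₂ ^ δ ≤ m₂ ^ β := Real.rpow_le_rpow_of_exponent_le hm1 hδβ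
  have hA : (0:ℝ) < α ^ (τ * (p - 1)) := Real.rpow_pos_of_pos hα0 _
  have hmβ : (0:ℝ) < m₂ ^ β := Real.rpow_pos_of_pos hm0 _
  have hαd : (0:ℝ) < α ^ (τ * δ) := Real.rpow_pos_of_pos hα0 _
  have hαb : (0:ℝ) < α ^ (τ * β) := Real.rpow_pos_of_pos hα0 _
  have hRHS : (α ^ τ * m₂ * t) ^ (p - 1)
      = α ^ (τ * (p - 1)) * (m₂ ^ (p - 1) * t ^ (p - 1)) := by
    rw [Real.mul_rpow (by positivity) ht0.le,
        Real.mul_rpow (by positivity) hm0.le,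
        ← Real.rpow_mul hα0.le]
    ring
  rw [hRHS]
  calc α * M * E * (m₂ ^ δ * α ^ (τ * δ) + m₂ ^ β * α ^ (τ * β))
      = M * E * (m₂ ^ δ * (α * α ^ (τ * δ)) + m₂ ^ β * (α * α ^ (τ * β))) := by
        ring
    _ ≤ M * E * (m₂ ^ β * α ^ (τ * (p - 1)) + m₂ ^ β * α ^ (τ * (p - 1))) := by
        apply mul_le_mul_of_nonneg_left _ (by positivity)
        apply add_le_add
        · rw [e1]
          exact mul_le_mul_of_nonneg_right e3 hA.le
        · exact mul_le_mul_of_nonneg_left e2 hmβ.le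
    _ = α ^ (τ * (p - 1)) * (2 * (M * E) * m₂ ^ β) := by ring
    _ ≤ α ^ (τ * (p - 1)) * (m₂ ^ (p - 1) * t ^ (p - 1)) :=
        mul_le_mul_of_nonneg_left key hA.le
end

section
/- Let p > 1 and let δ ≤ β < p − 1 be real numbers, let t ∈ (0, 1], M > 0 and E ≥ 1. Define m₂ = max{1, (3ME/t^{p−1})^{1/(p−1−β)}} and τ = 1/(p−1−β). Then for every α ≥ 1, the inequality (α^τ m₂ t)^{p−1} ≥ α M E (m₂^δ α^{τδ} + m₂^β α^{τβ}) holds. -/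
theorem stmt_2 (p δ β t M E : ℝ)
    (hp : 1 < p) (hδβ : δ ≤ β) (hβ : β < p - 1)
    (ht : t ∈ Set.Ioc (0:ℝ) 1) (hM : 0 < M) (hE : 1 ≤ E)
    (m₂ τ : ℝ)
    (hm₂ : m₂ = max 1 ((3 * M * E / t ^ (p - 1)) ^ (1 / (p - 1 - β))))
    (hτ : τ = 1 / (p - 1 - β)) :
    ∀ α : ℝ, 1 ≤ α →
      α * M * E * (m₂ ^ δ * α ^ (τ * δ) + m₂ ^ β * α ^ (τ * β)) ≤
        (α ^ τ * m₂ * t) ^ (p - 1) := by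
  obtain ⟨ht0, ht1⟩ := ht
  intro α hα
  have hα0 : (0:ℝ) < α := by linarith
  have hpb : (0:ℝ) < p - 1 - β := by linarith
  have hτ0 : 0 < τ := by rw [hτ]; positivity
  have hm1 : (1:ℝ) ≤ m₂ := hm₂ ▸ le_max_left _ _
  have hm0 : (0:ℝ) < m₂ := lt_of_lt_of_le one_pos hm1
  have htp : (0:ℝ) < t ^ (p-1) := Real.rpow_pos_of_pos ht0 _
  have hME : (0:ℝ) < 3*M*E := by nlinarith
  have hkey : 3*M*E ≤ m₂ ^ (p-1-β) * t ^ (p-1) := by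
    have h1 : (3*M*E / t^(p-1)) ^ (1/(p-1-β)) ≤ m₂ := hm₂ ▸ le_max_right _ _
    have h2 : ((3*M*E / t^(p-1)) ^ (1/(p-1-β))) ^ (p-1-β) ≤ m₂ ^ (p-1-β) :=
      Real.rpow_le_rpow (Real.rpow_nonneg (by positivity) _) h1 hpb.le
    rw [← Real.rpow_mul (by positivity), one_div_mul_cancel hpb.ne', Real.rpow_one,
      div_le_iff₀ htp] at h2
    linarith
  have hτ1 : τ * (p-1-β) = 1 := by rw [hτ]; field_simp
  have hrw : (α ^ τ * m₂ * t) ^ (p-1) = α * α^(τ*β) * (m₂^β * (m₂^(p-1-β) * t^(p-1))) := by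
    rw [Real.mul_rpow (by positivity) ht0.le, Real.mul_rpow (by positivity) hm0.le,
      ← Real.rpow_mul hα0.le]
    have e1 : τ * (p-1) = τ*β + 1 := by nlinarith
    have e2 : m₂ ^ (p-1) = m₂^β * m₂^(p-1-β) := by
      rw [← Real.rpow_add hm0]; ring_nf
    rw [e1, Real.rpow_add hα0, Real.rpow_one, e2]
    ring
  have hαδ : α^(τ*δ) ≤ α^(τ*β) :=
    Real.rpow_le_rpow_of_exponent_le hα (by nlinarith)
  have hmδ : m₂^δ ≤ m₂^β := Real.rpow_le_rpow_of_exponent_le hm1 hδβ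
  have hA0 : (0:ℝ) < α^(τ*β) := Real.rpow_pos_of_pos hα0 _
  have hB0 : (0:ℝ) < m₂^β := Real.rpow_pos_of_pos hm0 _
  have hd0 : (0:ℝ) ≤ α^(τ*δ) := (Real.rpow_pos_of_pos hα0 _).le
  have hprod : m₂^δ * α^(τ*δ) ≤ m₂^β * α^(τ*β) :=
    mul_le_mul hmδ hαδ hd0 hB0.le
  rw [hrw]
  have hABpos : (0:ℝ) < α * α^(τ*β) * m₂^β := by positivity
  nlinarith [mul_le_mul_of_nonneg_left hkey hABpos.le,
    mul_le_mul_of_nonneg_left hprod (by positivity : (0:ℝ) ≤ α*M*E),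
    mul_pos (mul_pos hα0 hA0) (mul_pos hB0 (mul_pos hM (by linarith : (0:ℝ)<E)))]
end

section
/- Let p > 1, let δ ≤ β < p − 1 be real numbers, and let λ₁ > 0, m > 0, S > 0 and a ∈ (0, 1). Define τ = 1/(p−1−β) and m₁ = m^τ/(S λ₁^τ). Then for every α ≥ λ₁ a^{p−1−δ}/m and every s ∈ (0, S]: if m₁ α^τ s < a then λ₁ (m₁ α^τ)^{p−1} s^{p−1} ≤ α m (m₁ α^τ s)^δ, and if m₁ α^τ s ≥ a then λ₁ (m₁ α^τ)^{p−1} s^{p−1} ≤ α m (m₁ α^τ s)^β. -/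
theorem stmt_4 (p δ β lam₁ m S a : ℝ)
    (hp : 1 < p) (hδβ : δ ≤ β) (hβ : β < p - 1) (hlam₁ : 0 < lam₁) (hm : 0 < m) (hS : 0 < S)
    (ha : a ∈ Set.Ioo (0:ℝ) 1)
    (τ m₁ : ℝ) (hτ : τ = 1 / (p - 1 - β)) (hm₁ : m₁ = m ^ τ / (S * lam₁ ^ τ)) :
    ∀ α : ℝ, lam₁ * a ^ (p - 1 - δ) / m ≤ α →
      ∀ s : ℝ, 0 < s → s ≤ S →
        (m₁ * α ^ τ * s < a →
          lam₁ * (m₁ * α ^ τ) ^ (p - 1) * s ^ (p - 1) ≤ α * m * (m₁ * α ^ τ * s) ^ δ) ∧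
        (a ≤ m₁ * α ^ τ * s →
          lam₁ * (m₁ * α ^ τ) ^ (p - 1) * s ^ (p - 1) ≤ α * m * (m₁ * α ^ τ * s) ^ β) := by
  obtain ⟨ha0, ha1⟩ := ha
  intro α hα s hs hsS
  have he : 0 < p - 1 - β := by linarith
  have hτpos : 0 < τ := by rw [hτ]; positivity
  have hαpos : 0 < α := lt_of_lt_of_le (by positivity) hα
  have hm₁pos : 0 < m₁ := by rw [hm₁]; positivity
  have hA : 0 < m₁ * α ^ τ := by positivity
  have hAs : 0 < m₁ * α ^ τ * s := by positivity
  have hτe : τ * (p - 1 - β) = 1 := by rw [hτ]; field_simp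
  -- key computation: (m₁ α^τ)^(p-1-β) = m*α/(S^(p-1-β)*λ₁)
  have h1 : (m₁ * α ^ τ) ^ (p - 1 - β) = m * α / (S ^ (p - 1 - β) * lam₁) := by
    rw [hm₁, div_mul_eq_mul_div, Real.div_rpow (by positivity) (by positivity),
        Real.mul_rpow (by positivity) (by positivity),
        Real.mul_rpow (by positivity) (by positivity),
        ← Real.rpow_mul hm.le, ← Real.rpow_mul hαpos.le, ← Real.rpow_mul hlam₁.le,
        hτe, Real.rpow_one, Real.rpow_one, Real.rpow_one]
  have hApow : (m₁ * α ^ τ) ^ (p - 1) = (m₁ * α ^ τ) ^ β * (m₁ * α ^ τ) ^ (p - 1 - β) := by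
    rw [← Real.rpow_add hA]; ring_nf
  have hspow : s ^ (p - 1) = s ^ β * s ^ (p - 1 - β) := by
    rw [← Real.rpow_add hs]; ring_nf
  have hsse : s ^ (p - 1 - β) ≤ S ^ (p - 1 - β) :=
    Real.rpow_le_rpow hs.le hsS he.le
  have hkey : lam₁ * (m₁ * α ^ τ) ^ (p - 1) * s ^ (p - 1) ≤ α * m * (m₁ * α ^ τ * s) ^ β := by
    rw [hApow, hspow, Real.mul_rpow hA.le hs.le, h1]
    have hSe : 0 < S ^ (p - 1 - β) := Real.rpow_pos_of_pos hS _
    have key : lam₁ * ((m₁ * α ^ τ) ^ β * (m * α / (S ^ (p - 1 - β) * lam₁))) * (s ^ β * s ^ (p - 1 - β))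
        = α * m * ((m₁ * α ^ τ) ^ β * s ^ β) * (s ^ (p - 1 - β) / S ^ (p - 1 - β)) := by
      field_simp
    rw [key]
    exact mul_le_of_le_one_right (by positivity) ((div_le_one hSe).mpr hsse)
  constructor
  · intro hlt
    refine hkey.trans ?_
    have : (m₁ * α ^ τ * s) ^ β ≤ (m₁ * α ^ τ * s) ^ δ :=
      Real.rpow_le_rpow_of_exponent_ge hAs (le_of_lt (hlt.trans ha1)) hδβ
    have hαm : 0 < α * m := by positivity
    nlinarith [Real.rpow_pos_of_pos hAs β]
  · intro _; exact hkey
end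

section
/- Let X be a nonempty compact topological space, let δ ≤ β be real numbers, and let f : X × ℝ → ℝ be continuous and strictly positive on X × (0, ∞). Let c₀, c_∞ : X → ℝ be continuous with c₀(x) > 0 and c_∞(x) > 0 for all x ∈ X, and assume that f(x,t)/t^δ → c₀(x) as t → 0⁺ uniformly in x ∈ X, and f(x,t)/t^β → c_∞(x) as t → ∞ uniformly in x ∈ X. Then there exist constants m > 0, M > 0 and a ∈ (0, 1) such that for all x ∈ X and all t > 0: m·(t^δ if t < a, and t^β if t ≥ a) ≤ f(x,t) ≤ M·(t^δ + t^β). -/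
theorem stmt_5 {X : Type*} [TopologicalSpace X] [CompactSpace X] [Nonempty X]
    (δ β : ℝ) (hδβ : δ ≤ β)
    (f : X × ℝ → ℝ)
    (hf_cont : ContinuousOn f (Set.univ ×ˢ Set.Ioi (0:ℝ)))
    (hf_pos : ∀ x : X, ∀ t : ℝ, 0 < t → 0 < f (x, t))
    (c₀ cinf : X → ℝ) (hc₀cont : Continuous c₀) (hcinfcont : Continuous cinf)
    (hc₀pos : ∀ x, 0 < c₀ x) (hcinfpos : ∀ x, 0 < cinf x)
    (h0 : ∀ ε > 0, ∃ η > 0, ∀ x : X, ∀ t : ℝ, 0 < t → t < η →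
      |f (x, t) / t ^ δ - c₀ x| < ε)
    (hinf : ∀ ε > 0, ∃ T : ℝ, ∀ x : X, ∀ t : ℝ, T ≤ t →
      |f (x, t) / t ^ β - cinf x| < ε) :
    ∃ m > (0:ℝ), ∃ M > (0:ℝ), ∃ a ∈ Set.Ioo (0:ℝ) 1, ∀ x : X, ∀ t : ℝ, 0 < t →
      m * (if t < a then t ^ δ else t ^ β) ≤ f (x, t) ∧
      f (x, t) ≤ M * (t ^ δ + t ^ β) := by
  -- extrema of c₀ and cinf
  obtain ⟨x₀, -, hx₀'⟩ := isCompact_univ.exists_isMinOn Set.univ_nonempty hc₀cont.continuousOn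
  obtain ⟨x₁, -, hx₁'⟩ := isCompact_univ.exists_isMinOn Set.univ_nonempty hcinfcont.continuousOn
  obtain ⟨x₄, -, hx₄'⟩ := isCompact_univ.exists_isMaxOn Set.univ_nonempty hc₀cont.continuousOn
  obtain ⟨x₅, -, hx₅'⟩ := isCompact_univ.exists_isMaxOn Set.univ_nonempty hcinfcont.continuousOn
  have hx₀ := isMinOn_iff.mp hx₀'
  have hx₁ := isMinOn_iff.mp hx₁'
  have hx₄ := isMaxOn_iff.mp hx₄'
  have hx₅ := isMaxOn_iff.mp hx₅'
  set ε₀ := c₀ x₀ / 2 with hε₀def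
  set εi := cinf x₁ / 2 with hεidef
  have hε₀ : 0 < ε₀ := half_pos (hc₀pos x₀)
  have hεi : 0 < εi := half_pos (hcinfpos x₁)
  obtain ⟨η, hη, hnear⟩ := h0 ε₀ hε₀
  obtain ⟨T, hfar⟩ := hinf εi hεi
  set T' : ℝ := max T 1 with hT'def
  have hT'1 : (1:ℝ) ≤ T' := le_max_right _ _
  set a : ℝ := min (η / 2) (1 / 2) with hadef
  have ha : 0 < a := lt_min (half_pos hη) (by norm_num)
  have haη : a < η := lt_of_le_of_lt (min_le_left _ _) (half_lt_self hη)
  have ha1 : a < 1 := lt_of_le_of_lt (min_le_right _ _) (by norm_num)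
  have haT' : a ≤ T' := le_trans ha1.le hT'1
  -- middle compact region
  set S : Set (X × ℝ) := Set.univ ×ˢ Set.Icc a T' with hSdef
  have hScomp : IsCompact S := isCompact_univ.prod isCompact_Icc
  have hSsub : S ⊆ Set.univ ×ˢ Set.Ioi (0:ℝ) := by
    refine Set.prod_mono le_rfl ?_
    intro t ht
    exact lt_of_lt_of_le ha ht.1
  have hSne : S.Nonempty := ⟨(Classical.arbitrary X, a), Set.mem_univ _, le_refl a, haT'⟩
  obtain ⟨p, hpS, hpmin'⟩ := hScomp.exists_isMinOn hSne (hf_cont.mono hSsub)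
  obtain ⟨q, hqS, hqmax'⟩ := hScomp.exists_isMaxOn hSne (hf_cont.mono hSsub)
  have hpmin := isMinOn_iff.mp hpmin'
  have hqmax := isMaxOn_iff.mp hqmax'
  have hm₂ : 0 < f p := by
    have := hf_pos p.1 p.2 (lt_of_lt_of_le ha hpS.2.1)
    simpa using this
  -- extrema of t^β and t^δ on [a, T']
  have hrpow_cont : ∀ γ : ℝ, ContinuousOn (fun t : ℝ => t ^ γ) (Set.Icc a T') := by
    intro γ
    intro t ht
    exact (Real.continuousAt_rpow_const t γ (Or.inl (ne_of_gt (lt_of_lt_of_le ha ht.1)))).continuousWithinAt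
  have hIccne : (Set.Icc a T').Nonempty := ⟨a, le_refl a, haT'⟩
  obtain ⟨tB, htBI, htB'⟩ := isCompact_Icc.exists_isMaxOn hIccne (hrpow_cont β)
  obtain ⟨tb, htbI, htb'⟩ := isCompact_Icc.exists_isMinOn hIccne (hrpow_cont δ)
  have htB := isMaxOn_iff.mp htB'
  have htb := isMinOn_iff.mp htb'
  have hB : 0 < tB ^ β := Real.rpow_pos_of_pos (lt_of_lt_of_le ha htBI.1) _
  have hb : 0 < tb ^ δ := Real.rpow_pos_of_pos (lt_of_lt_of_le ha htbI.1) _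
  -- constants
  set m : ℝ := min (min ε₀ εi) (f p / tB ^ β) with hmdef
  set M : ℝ := max (max (c₀ x₄ + ε₀) (cinf x₅ + εi)) (f q / tb ^ δ) with hMdef
  have hmpos : 0 < m := lt_min (lt_min hε₀ hεi) (div_pos hm₂ hB)
  have hMpos : 0 < M :=
    lt_of_lt_of_le (add_pos (hc₀pos x₄) hε₀) (le_trans (le_max_left _ _) (le_max_left _ _))
  refine ⟨m, hmpos, M, hMpos, a, ⟨ha, ha1⟩, ?_⟩
  intro x t ht
  have htδ : 0 < t ^ δ := Real.rpow_pos_of_pos ht _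
  have htβ : 0 < t ^ β := Real.rpow_pos_of_pos ht _
  by_cases hta : t < a
  · -- near zero
    rw [if_pos hta]
    have hab := abs_lt.mp (hnear x t ht (lt_trans hta haη))
    have hfe : f (x, t) = f (x, t) / t ^ δ * t ^ δ := (div_mul_cancel₀ _ (ne_of_gt htδ)).symm
    constructor
    · have h1 : c₀ x - ε₀ ≥ ε₀ := by
        have := hx₀ x (Set.mem_univ x)
        simp only [hε₀def]
        linarith
      have hm1 : m ≤ ε₀ := le_trans (min_le_left _ _) (min_le_left _ _)
      nlinarith [hab.1, htδ]
    · have h2 : f (x, t) / t ^ δ < M := by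
        have := hx₄ x (Set.mem_univ x)
        have hM1 : c₀ x₄ + ε₀ ≤ M := le_trans (le_max_left _ _) (le_max_left _ _)
        linarith [hab.2]
      have h3 : f (x, t) ≤ M * t ^ δ := by
        rw [hfe]; exact mul_le_mul_of_nonneg_right h2.le htδ.le
      nlinarith [mul_nonneg hMpos.le htβ.le]
  · by_cases htT : t ≤ T'
    · -- middle region
      rw [if_neg hta]
      have htI : t ∈ Set.Icc a T' := ⟨not_lt.mp hta, htT⟩
      have hxtS : (x, t) ∈ S := ⟨Set.mem_univ _, htI⟩
      have hlow := hpmin (x, t) hxtS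
      have hhigh := hqmax (x, t) hxtS
      have htBle : t ^ β ≤ tB ^ β := htB t htI
      have htble : tb ^ δ ≤ t ^ δ := htb t htI
      constructor
      · have hm1 : m ≤ f p / tB ^ β := min_le_right _ _
        have : m * t ^ β ≤ f p / tB ^ β * tB ^ β := by
          apply mul_le_mul hm1 htBle htβ.le (div_pos hm₂ hB).le
        rw [div_mul_cancel₀ _ (ne_of_gt hB)] at this
        linarith
      · have hM1 : f q / tb ^ δ ≤ M := le_max_right _ _
        have h3 : f q / tb ^ δ * tb ^ δ ≤ M * t ^ δ := by
          apply mul_le_mul hM1 htble hb.le hMpos.le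
        rw [div_mul_cancel₀ _ (ne_of_gt hb)] at h3
        nlinarith [htβ]
    · -- near infinity
      rw [if_neg hta]
      have htT2 : T ≤ t := le_trans (le_max_left T 1) (le_of_not_ge htT)
      have hab := abs_lt.mp (hfar x t htT2)
      have hfe : f (x, t) = f (x, t) / t ^ β * t ^ β := (div_mul_cancel₀ _ (ne_of_gt htβ)).symm
      constructor
      · have h1 : cinf x - εi ≥ εi := by
          have := hx₁ x (Set.mem_univ x)
          simp only [hεidef]
          linarith
        have hm1 : m ≤ εi := le_trans (min_le_left _ _) (min_le_right _ _)
        have h3 : m * t ^ β ≤ f (x, t) / t ^ β * t ^ β := by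
          apply mul_le_mul_of_nonneg_right _ htβ.le
          linarith [hab.1]
        rw [← hfe] at h3; exact h3
      · have h2 : f (x, t) / t ^ β < M := by
          have := hx₅ x (Set.mem_univ x)
          have hM1 : cinf x₅ + εi ≤ M := le_trans (le_max_right _ _) (le_max_left _ _)
          linarith [hab.2]
        have h3 : f (x, t) ≤ M * t ^ β := by
          rw [hfe]; exact mul_le_mul_of_nonneg_right h2.le htβ.le
        nlinarith [mul_nonneg hMpos.le htδ.le]
end
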